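/- The bracket on ℝ⁴ given by [e₁,e₃]=[e₄,e₂]=e₁ and [e₁,e₄]=[e₂,e₃]=e₂ satisfies the Jacobi identity, and with the standard hypercomplex structure and metric g(x,y)=x¹y¹+x²y²-x³y³-x⁴y⁴, the Lee forms have only nonzero components θ₁(e₄) = -2, θ₂(e₁) = 4, θ₃(e₂) = 4, so that the W-conditions θ₂∘J₂ = θ₃∘J₃ = -2(θ₁∘J₁) hold. -/
import Mathlib


noncomputable section

/-- The underlying 4-dimensional real vector space. -/
abbrev V : Type := Fin 4 → ℝ

/-- The standard basis of ℝ⁴. -/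
def e : Fin 4 → V := fun i => Pi.single i 1

/-- The neutral metric g(x,y) = x¹y¹ + x²y² - x³y³ - x⁴y⁴. -/
def g (x y : V) : ℝ := x 0 * y 0 + x 1 * y 1 - x 2 * y 2 - x 3 * y 3

/-- J₁ of the standard hypercomplex structure. -/
def J1 (x : V) : V := ![-x 1, x 0, x 3, -x 2]

/-- J₂ of the standard hypercomplex structure. -/
def J2 (x : V) : V := ![-x 2, -x 3, x 0, x 1]

/-- J₃ of the standard hypercomplex structure. -/
def J3 (x : V) : V := ![x 3, -x 2, x 1, -x 0]

/-- The bracket of type (hc3), case of signature (2,0):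
[e₁,e₃]=[e₄,e₂]=e₁, [e₁,e₄]=[e₂,e₃]=e₂. -/
def br (x y : V) : V :=
  ![x 0 * y 2 - x 2 * y 0 + x 3 * y 1 - x 1 * y 3,
    x 0 * y 3 - x 3 * y 0 + x 1 * y 2 - x 2 * y 1, 0, 0]


/-- Structure tensor F(x,y,z) = g((∇ₓJ)y, z) = g(∇ₓ(Jy) - J(∇ₓy), z). -/
def F (J : V → V) (nabla : V → V → V) (x y z : V) : ℝ :=
  g (nabla x (J y) - J (nabla x y)) z

/-- Lee form θ(z) = Σᵢ gⁱⁱ F(eᵢ,eᵢ,z) with gⁱⁱ = (1,1,-1,-1). -/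
def theta (J : V → V) (nabla : V → V → V) (z : V) : ℝ :=
  F J nabla (e 0) (e 0) z + F J nabla (e 1) (e 1) z
    - F J nabla (e 2) (e 2) z - F J nabla (e 3) (e 3) z

lemma e_0 : e 0 = ![1,0,0,0] := by funext j; fin_cases j <;> rfl
lemma e_1 : e 1 = ![0,1,0,0] := by funext j; fin_cases j <;> rfl
lemma e_2 : e 2 = ![0,0,1,0] := by funext j; fin_cases j <;> rfl
lemma e_3 : e 3 = ![0,0,0,1] := by funext j; fin_cases j <;> rfl

lemma g_sub (a b z : V) : g (a - b) z = g a z - g b z := by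
  simp [g, Pi.sub_apply]; ring

lemma g_J1 (v z : V) : g (J1 v) z = -(g v (J1 z)) := by
  simp [g, J1, Matrix.cons_val_zero, Matrix.cons_val_one]; ring

lemma g_J2 (v z : V) : g (J2 v) z = g v (J2 z) := by
  simp [g, J2]; ring

lemma g_J3 (v z : V) : g (J3 v) z = g v (J3 z) := by
  simp [g, J3]; ring

/-- The (hc3b) bracket satisfies Jacobi; the Lee forms have only the nonzero
components θ₁(e₄)=-2, θ₂(e₁)=4, θ₃(e₂)=4; and θ₂∘J₂ = θ₃∘J₃ = -2(θ₁∘J₁). -/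
theorem hc3b_lee_forms (nabla : V → V → V)
    (hK : ∀ x y z : V,
      2 * g (nabla x y) z = g (br x y) z + g (br z x) y + g (br z y) x) :
    (∀ x y z : V, br (br x y) z + br (br y z) x + br (br z x) y = 0) ∧
    (∀ i : Fin 4, theta J1 nabla (e i) = if i = 3 then -2 else 0) ∧
    (∀ i : Fin 4, theta J2 nabla (e i) = if i = 0 then 4 else 0) ∧
    (∀ i : Fin 4, theta J3 nabla (e i) = if i = 1 then 4 else 0) ∧
    (∀ z : V, theta J2 nabla (J2 z) = theta J3 nabla (J3 z)) ∧
    (∀ z : V, theta J3 nabla (J3 z) = -2 * theta J1 nabla (J1 z)) := by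

  have hn : ∀ x y z : V, g (nabla x y) z
      = (g (br x y) z + g (br z x) y + g (br z y) x) / 2 := by
    intro x y z
    have := hK x y z
    linarith
  have hF1 : ∀ x y z : V, F J1 nabla x y z
      = (g (br x (J1 y)) z + g (br z x) (J1 y) + g (br z (J1 y)) x) / 2
        + (g (br x y) (J1 z) + g (br (J1 z) x) y + g (br (J1 z) y) x) / 2 := by
    intro x y z
    rw [F, g_sub, g_J1, ← hn, ← hn]
    ring
  have hF2 : ∀ x y z : V, F J2 nabla x y z
      = (g (br x (J2 y)) z + g (br z x) (J2 y) + g (br z (J2 y)) x) / 2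
        - (g (br x y) (J2 z) + g (br (J2 z) x) y + g (br (J2 z) y) x) / 2 := by
    intro x y z
    rw [F, g_sub, g_J2, ← hn, ← hn]
  have hF3 : ∀ x y z : V, F J3 nabla x y z
      = (g (br x (J3 y)) z + g (br z x) (J3 y) + g (br z (J3 y)) x) / 2
        - (g (br x y) (J3 z) + g (br (J3 z) x) y + g (br (J3 z) y) x) / 2 := by
    intro x y z
    rw [F, g_sub, g_J3, ← hn, ← hn]
  have t1 : ∀ z : V, theta J1 nabla z = -2 * z 3 := by
    intro z
    simp only [theta, hF1, g, br, J1, e_0, e_1, e_2, e_3,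
      Matrix.cons_val_zero, Matrix.cons_val_one, Matrix.head_cons,
      Matrix.cons_val_two, Matrix.tail_cons, Matrix.cons_val_three]
    ring
  have t2 : ∀ z : V, theta J2 nabla z = 4 * z 0 := by
    intro z
    simp only [theta, hF2, g, br, J2, e_0, e_1, e_2, e_3,
      Matrix.cons_val_zero, Matrix.cons_val_one, Matrix.head_cons,
      Matrix.cons_val_two, Matrix.tail_cons, Matrix.cons_val_three]
    ring
  have t3 : ∀ z : V, theta J3 nabla z = 4 * z 1 := by
    intro z
    simp only [theta, hF3, g, br, J3, e_0, e_1, e_2, e_3,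
      Matrix.cons_val_zero, Matrix.cons_val_one, Matrix.head_cons,
      Matrix.cons_val_two, Matrix.tail_cons, Matrix.cons_val_three]
    ring
  refine ⟨?_, ?_, ?_, ?_, ?_, ?_⟩
  · intro x y z
    funext j
    fin_cases j <;> simp [br] <;> ring
  · intro i
    rw [t1]
    fin_cases i <;> simp [e, Pi.single_apply]
  · intro i
    rw [t2]
    fin_cases i <;> simp [e, Pi.single_apply]
  · intro i
    rw [t3]
    fin_cases i <;> simp [e, Pi.single_apply]
  · intro z
    rw [t2, t3]
    simp [J2, J3]
  · intro z
    rw [t3, t1]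
    simp [J3, J1]
    ring
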